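/- Let g: ℕ → ℝ be additive and λ₀ = λ₀(X) ∈ ℝ with |λ₀(X)| ≪ B_g(X)/log X. If B_{g_{λ₀}}(X) = o(B_g(X)) as X → ∞, where g_{λ₀}(n) := g(n) − λ₀(X) log n, then |λ₀(X)| ≥ (1/2)·B_g(X)/log X for all sufficiently large X. -/

import Mathlib

open Finset

/-- The set of prime powers `p^k ≤ Y` (as natural numbers `≥ 2`). -/
noncomputable def ppows (Y : ℝ) : Finset ℕ :=
  (Finset.Icc 2 ⌊Y⌋₊).filter IsPrimePow

/-- `A_g(Y) = ∑_{p^k ≤ Y} g(p^k) p^{-k} (1 - 1/p)` for real-valued `g`. -/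
noncomputable def AgR (g : ℕ → ℝ) (Y : ℝ) : ℝ :=
  ∑ q ∈ ppows Y, g q * (1 / (q : ℝ)) * (1 - 1 / ((q.minFac : ℝ)))

/-- `B_g(Y) = (∑_{p^k ≤ Y} g(p^k)² p^{-k})^{1/2}` for real-valued `g`. -/
noncomputable def BgR (g : ℕ → ℝ) (Y : ℝ) : ℝ :=
  Real.sqrt (∑ q ∈ ppows Y, (g q) ^ 2 / (q : ℝ))

/-- `g` is additive: `g(mn) = g(m) + g(n)` whenever `gcd(m,n) = 1`. -/
def IsAdditiveR (g : ℕ → ℝ) : Prop :=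
  ∀ m n : ℕ, Nat.Coprime m n → g (m * n) = g m + g n

lemma sqrt_sum_sq_add {ι : Type*} (s : Finset ι) (a b : ι → ℝ) :
    Real.sqrt (∑ i ∈ s, (a i + b i) ^ 2)
      ≤ Real.sqrt (∑ i ∈ s, a i ^ 2) + Real.sqrt (∑ i ∈ s, b i ^ 2) := by
  have hA : (0:ℝ) ≤ ∑ i ∈ s, a i ^ 2 := Finset.sum_nonneg fun i _ => sq_nonneg _
  have hB : (0:ℝ) ≤ ∑ i ∈ s, b i ^ 2 := Finset.sum_nonneg fun i _ => sq_nonneg _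
  have cs := Real.sum_mul_le_sqrt_mul_sqrt s a b
  have key : ∑ i ∈ s, (a i + b i) ^ 2
      ≤ (Real.sqrt (∑ i ∈ s, a i ^ 2) + Real.sqrt (∑ i ∈ s, b i ^ 2)) ^ 2 := by
    have expand : ∑ i ∈ s, (a i + b i) ^ 2
        = ∑ i ∈ s, a i ^ 2 + 2 * ∑ i ∈ s, a i * b i + ∑ i ∈ s, b i ^ 2 := by
      rw [Finset.mul_sum, ← Finset.sum_add_distrib, ← Finset.sum_add_distrib]
      exact Finset.sum_congr rfl fun i _ => by ring
    have e1 := Real.sq_sqrt hA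
    have e2 := Real.sq_sqrt hB
    nlinarith [Real.sqrt_nonneg (∑ i ∈ s, a i ^ 2), Real.sqrt_nonneg (∑ i ∈ s, b i ^ 2)]
  calc Real.sqrt (∑ i ∈ s, (a i + b i) ^ 2)
      ≤ Real.sqrt ((Real.sqrt (∑ i ∈ s, a i ^ 2) + Real.sqrt (∑ i ∈ s, b i ^ 2)) ^ 2) :=
        Real.sqrt_le_sqrt key
    _ = _ := Real.sqrt_sq (by positivity)

lemma lem_triangle (g : ℕ → ℝ) (c X : ℝ) :
    BgR g X ≤ |c| * BgR (fun n => Real.log n) X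
      + BgR (fun n => g n - c * Real.log n) X := by
  have h := sqrt_sum_sq_add (ppows X) (fun q => c * Real.log q / Real.sqrt q)
    (fun q => (g q - c * Real.log q) / Real.sqrt q)
  have hq : ∀ q ∈ ppows X, ((q:ℝ)) = Real.sqrt q ^ 2 := fun q _ =>
    (Real.sq_sqrt (by positivity)).symm
  have e0 : ∀ (f : ℕ → ℝ), BgR f X = Real.sqrt (∑ q ∈ ppows X, (f q / Real.sqrt q) ^ 2) := by
    intro f
    unfold BgR
    congr 1
    refine Finset.sum_congr rfl fun q hq' => ?_
    rw [div_pow, Real.sq_sqrt (by positivity : (0:ℝ) ≤ (q:ℝ))]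
  rw [e0 g, e0 (fun n => g n - c * Real.log n)]
  have e1 : (∑ q ∈ ppows X, (g q / Real.sqrt q) ^ 2)
      = ∑ q ∈ ppows X, ((fun q => c * Real.log q / Real.sqrt q) q
        + (fun q => (g q - c * Real.log q) / Real.sqrt q) q) ^ 2 := by
    refine Finset.sum_congr rfl fun q _ => ?_
    simp only
    rw [← add_div]
    ring_nf
  rw [e1]
  refine h.trans ?_
  gcongr
  · rw [e0 (fun n => Real.log n)]
    have : ∑ q ∈ ppows X, (c * Real.log q / Real.sqrt q) ^ 2
        = c ^ 2 * ∑ q ∈ ppows X, (Real.log q / Real.sqrt q) ^ 2 := by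
      rw [Finset.mul_sum]
      exact Finset.sum_congr rfl fun q _ => by ring
    rw [this, Real.sqrt_mul (sq_nonneg c), Real.sqrt_sq_eq_abs]

lemma cheby (n : ℕ) :
    ∑ p ∈ (Finset.range (n+1)).filter Nat.Prime, Real.log p ≤ n * Real.log 4 := by
  have h1 : Real.log (primorial n) ≤ Real.log ((4:ℕ) ^ n) := by
    apply Real.log_le_log (by exact_mod_cast primorial_pos n)
    exact_mod_cast primorial_le_4_pow n
  have h2 : Real.log (primorial n)
      = ∑ p ∈ (Finset.range (n+1)).filter Nat.Prime, Real.log p := by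
    rw [primorial]
    push_cast
    rw [Real.log_prod]
    intro p hp
    simp only [Finset.mem_filter] at hp
    exact_mod_cast hp.2.pos.ne'
  rw [h2] at h1
  refine h1.trans ?_
  push_cast
  rw [Real.log_pow]

lemma gauss (n : ℕ) : ∑ j ∈ Finset.range n, ((j:ℝ)+1) = n*(n+1)/2 := by
  induction n with
  | zero => simp
  | succ m ih => rw [Finset.sum_range_succ, ih]; push_cast; ring

lemma prime_part (X : ℝ) (hX : 1 ≤ X) :
    ∑ q ∈ (ppows X).filter Nat.Prime, (Real.log q)^2 / q
      ≤ 2 * (Real.log X + 2 * Real.log 2)^2 := by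
  set N := ⌊X⌋₊ with hN
  have hN1 : 1 ≤ N := Nat.le_floor (by exact_mod_cast hX)
  set J := Nat.log 2 N with hJ
  set P := (ppows X).filter Nat.Prime with hP
  have hmaps : ∀ q ∈ P, Nat.log 2 q ∈ Finset.range (J+1) := by
    intro q hq
    simp only [hP, ppows, Finset.mem_filter, Finset.mem_Icc] at hq
    exact Finset.mem_range.2 (Nat.lt_succ_of_le (Nat.log_mono_right hq.1.1.2))
  have l2pos : (0:ℝ) < Real.log 2 := Real.log_pos (by norm_num)
  rw [← Finset.sum_fiberwise_of_maps_to hmaps (fun q => (Real.log q)^2 / q)]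
  have fiber_bd : ∀ j ∈ Finset.range (J+1),
      ∑ q ∈ P.filter (fun q => Nat.log 2 q = j), (Real.log q)^2 / q
        ≤ 4 * Real.log 2 ^ 2 * ((j:ℝ) + 1) := by
    intro j _
    have step1 : ∑ q ∈ P.filter (fun q => Nat.log 2 q = j), (Real.log q)^2 / q
        ≤ ∑ q ∈ P.filter (fun q => Nat.log 2 q = j),
            (((j:ℝ)+1) * Real.log 2 / 2^j) * Real.log q := by
      refine Finset.sum_le_sum fun q hq => ?_
      simp only [Finset.mem_filter, hP, ppows, Finset.mem_Icc] at hq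
      obtain ⟨⟨⟨⟨h2q, hqN⟩, _⟩, hqprime⟩, hlog⟩ := hq
      have hq1 : (1:ℝ) ≤ (q:ℝ) := by exact_mod_cast le_trans (by norm_num) h2q
      have hlogq0 : 0 ≤ Real.log q := Real.log_nonneg hq1
      have hup : Real.log q ≤ ((j:ℝ)+1) * Real.log 2 := by
        have : (q:ℝ) ≤ (2:ℝ)^(j+1) := by
          have := (Nat.lt_pow_succ_log_self (one_lt_two) q)
          rw [hlog] at this
          exact_mod_cast this.le
        calc Real.log q ≤ Real.log ((2:ℝ)^(j+1)) := Real.log_le_log (by linarith) this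
          _ = ((j:ℝ)+1) * Real.log 2 := by rw [Real.log_pow]; push_cast; ring
      have hlow : (2:ℝ)^j ≤ (q:ℝ) := by
        have := Nat.pow_log_le_self 2 (show q ≠ 0 by omega)
        rw [hlog] at this
        exact_mod_cast this
      calc (Real.log q)^2 / q = Real.log q * (Real.log q / q) := by ring
        _ ≤ (((j:ℝ)+1) * Real.log 2) * (Real.log q / 2^j) := by
            apply mul_le_mul hup ?_ (by positivity) (by positivity)
            exact div_le_div_of_nonneg_left hlogq0 (by positivity) hlow
        _ = (((j:ℝ)+1) * Real.log 2 / 2^j) * Real.log q := by ring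
    refine step1.trans ?_
    rw [← Finset.mul_sum]
    have sub_bd : ∑ q ∈ P.filter (fun q => Nat.log 2 q = j), Real.log q
        ≤ (2:ℝ)^(j+1) * Real.log 4 := by
      have hsubset : P.filter (fun q => Nat.log 2 q = j)
          ⊆ (Finset.range (2^(j+1) - 1 + 1)).filter Nat.Prime := by
        intro q hq
        simp only [Finset.mem_filter, hP, Finset.mem_range] at hq ⊢
        refine ⟨?_, hq.1.2⟩
        have : q < 2^(j+1) := by
          rw [← hq.2]; exact Nat.lt_pow_succ_log_self (by norm_num) q
        omega
      have h1 : ∑ q ∈ P.filter (fun q => Nat.log 2 q = j), Real.log q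
          ≤ ∑ p ∈ (Finset.range (2^(j+1) - 1 + 1)).filter Nat.Prime, Real.log p := by
        refine Finset.sum_le_sum_of_subset_of_nonneg hsubset fun p hp _ => ?_
        simp only [Finset.mem_filter] at hp
        exact Real.log_nonneg (by exact_mod_cast hp.2.one_lt.le)
      refine h1.trans ((cheby _).trans ?_)
      have : ((2^(j+1) - 1 : ℕ) : ℝ) ≤ (2:ℝ)^(j+1) := by
        have : (2:ℕ)^(j+1) - 1 ≤ 2^(j+1) := Nat.sub_le _ _
        exact_mod_cast this
      have h4 : (0:ℝ) ≤ Real.log 4 := Real.log_nonneg (by norm_num)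
      exact mul_le_mul_of_nonneg_right this h4
    calc (((j:ℝ)+1) * Real.log 2 / 2^j) * ∑ q ∈ P.filter (fun q => Nat.log 2 q = j), Real.log q
        ≤ (((j:ℝ)+1) * Real.log 2 / 2^j) * ((2:ℝ)^(j+1) * Real.log 4) := by
          apply mul_le_mul_of_nonneg_left sub_bd (by positivity)
      _ = 4 * Real.log 2 ^ 2 * ((j:ℝ) + 1) := by
          have h4 : Real.log 4 = 2 * Real.log 2 := by
            rw [show (4:ℝ) = 2^2 by norm_num, Real.log_pow]; push_cast; ring
          rw [h4]; field_simp; ring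
  refine (Finset.sum_le_sum fiber_bd).trans ?_
  rw [← Finset.mul_sum, gauss]
  push_cast
  have hJb : (J:ℝ) * Real.log 2 ≤ Real.log X := by
    have h2J : ((2:ℕ)^J : ℝ) ≤ X := by
      calc ((2:ℕ)^J : ℝ) ≤ (N:ℝ) := by exact_mod_cast Nat.pow_log_le_self 2 (by omega)
        _ ≤ X := Nat.floor_le (by linarith)
    calc (J:ℝ) * Real.log 2 = Real.log ((2:ℝ)^J) := by rw [Real.log_pow]
      _ ≤ Real.log X := Real.log_le_log (by positivity) (by exact_mod_cast h2J)
  have hXlog : 0 ≤ Real.log X := Real.log_nonneg hX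
  have key : Real.log 2 * ((J:ℝ)+2) ≤ Real.log X + 2 * Real.log 2 := by
    push_cast; nlinarith
  calc 4 * Real.log 2 ^ 2 * (((J:ℝ)+1) * (((J:ℝ)+1)+1) / 2)
      = 2 * ((Real.log 2 * ((J:ℝ)+1)) * (Real.log 2 * ((J:ℝ)+2))) := by push_cast; ring
    _ ≤ 2 * ((Real.log X + 2*Real.log 2) * (Real.log X + 2*Real.log 2)) := by
        have ha : Real.log 2 * ((J:ℝ)+1) ≤ Real.log X + 2*Real.log 2 := by nlinarith
        have hb : 0 ≤ Real.log 2 * ((J:ℝ)+1) := by positivity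
        nlinarith
    _ = 2 * (Real.log X + 2 * Real.log 2)^2 := by ring

lemma log_sq_div_le (q : ℕ) (hq : 2 ≤ q) :
    (Real.log q)^2 / q ≤ 64 * (((q:ℝ) ^ (3/4 : ℝ))⁻¹) := by
  have hq0 : (0:ℝ) < q := by positivity
  have hq1 : (1:ℝ) ≤ (q:ℝ) := by exact_mod_cast le_trans (by norm_num) hq
  have hlog : Real.log q ≤ 8 * (q:ℝ) ^ (1/8 : ℝ) := by
    have h1 : Real.log ((q:ℝ) ^ (1/8:ℝ)) = (1/8) * Real.log q := Real.log_rpow hq0 _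
    have h2 : Real.log ((q:ℝ) ^ (1/8:ℝ)) ≤ (q:ℝ) ^ (1/8:ℝ) :=
      Real.log_le_self (by positivity)
    linarith [h1, h2]
  have hlog0 : 0 ≤ Real.log q := Real.log_nonneg hq1
  have hsq : (Real.log q)^2 ≤ 64 * (q:ℝ) ^ (1/4 : ℝ) := by
    have := mul_le_mul hlog hlog hlog0 (by positivity)
    calc (Real.log q)^2 = Real.log q * Real.log q := sq (Real.log q) ▸ by ring
      _ ≤ (8 * (q:ℝ)^(1/8:ℝ)) * (8 * (q:ℝ)^(1/8:ℝ)) := this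
      _ = 64 * ((q:ℝ)^(1/8:ℝ) * (q:ℝ)^(1/8:ℝ)) := by ring
      _ = 64 * (q:ℝ) ^ (1/4 : ℝ) := by
          rw [← Real.rpow_add hq0]; norm_num
  calc (Real.log q)^2 / q ≤ (64 * (q:ℝ)^(1/4:ℝ)) / q := by gcongr
    _ = 64 * (((q:ℝ) ^ (3/4 : ℝ))⁻¹) := by
        have e := Real.rpow_sub hq0 (1/4) 1
        rw [Real.rpow_one] at e
        rw [mul_div_assoc, ← e, show (1/4 - 1 : ℝ) = -(3/4) by norm_num,
          Real.rpow_neg hq0.le]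

lemma pair_bound (p k : ℕ) (hp : 2 ≤ p) (hk : 2 ≤ k) :
    (((p ^ k : ℕ) : ℝ) ^ (3/4 : ℝ))⁻¹
      ≤ ((p:ℝ) ^ ((3:ℝ)/2))⁻¹ * ((2:ℝ) ^ ((3:ℝ)/2) * ((2:ℝ) ^ (-(3/4) : ℝ)) ^ k) := by
  have hp0 : (0:ℝ) < p := by positivity
  have hp2R : (2:ℝ) ≤ (p:ℝ) := by exact_mod_cast hp
  have hcast : (((p ^ k : ℕ) : ℝ) ^ (3/4 : ℝ)) = (p:ℝ) ^ ((k:ℝ) * (3/4)) := by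
    push_cast
    rw [← Real.rpow_natCast (p:ℝ) k, ← Real.rpow_mul hp0.le]
  have hrk : ((2:ℝ) ^ (-(3/4) : ℝ)) ^ k = (2:ℝ) ^ ((-(3/4)) * (k:ℝ)) := by
    rw [← Real.rpow_natCast ((2:ℝ) ^ (-(3/4) : ℝ)) k, ← Real.rpow_mul (by norm_num)]
  have hc : (2:ℝ) ^ ((3:ℝ)/2) * (2:ℝ) ^ ((-(3/4)) * (k:ℝ)) = (2:ℝ) ^ ((3:ℝ)/2 - (3/4) * k) := by
    rw [← Real.rpow_add (by norm_num)]; ring_nf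
  rw [hcast, hrk, hc]
  have hE : (0:ℝ) ≤ (k:ℝ) * (3/4) - 3/2 := by
    have : (2:ℝ) ≤ (k:ℝ) := by exact_mod_cast hk
    linarith
  have key : (p:ℝ) ^ ((3:ℝ)/2) * (2:ℝ) ^ ((k:ℝ) * (3/4) - 3/2) ≤ (p:ℝ) ^ ((k:ℝ) * (3/4)) := by
    have e : (p:ℝ) ^ ((k:ℝ) * (3/4)) = (p:ℝ) ^ ((3:ℝ)/2) * (p:ℝ) ^ ((k:ℝ) * (3/4) - 3/2) := by
      rw [← Real.rpow_add hp0]; ring_nf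
    rw [e]
    have := Real.rpow_le_rpow (by norm_num : (0:ℝ) ≤ 2) hp2R hE
    exact mul_le_mul_of_nonneg_left this (by positivity)
  have hpos : (0:ℝ) < (p:ℝ) ^ ((3:ℝ)/2) * (2:ℝ) ^ ((k:ℝ) * (3/4) - 3/2) := by positivity
  calc ((p:ℝ) ^ ((k:ℝ) * (3/4)))⁻¹
      ≤ ((p:ℝ) ^ ((3:ℝ)/2) * (2:ℝ) ^ ((k:ℝ) * (3/4) - 3/2))⁻¹ := by
        exact inv_anti₀ hpos key
    _ = ((p:ℝ) ^ ((3:ℝ)/2))⁻¹ * (2:ℝ) ^ ((3:ℝ)/2 - (3/4) * k) := by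
        rw [mul_inv]
        congr 1
        rw [← Real.rpow_neg (by norm_num)]
        congr 1
        ring

lemma ppow_part : ∃ C : ℝ, 0 ≤ C ∧ ∀ X : ℝ,
    ∑ q ∈ (ppows X).filter (fun q => ¬ q.Prime), (Real.log q)^2 / q ≤ C := by
  set r : ℝ := (2:ℝ) ^ (-(3/4) : ℝ) with hr
  have hr0 : 0 ≤ r := by positivity
  have hr1 : r < 1 := Real.rpow_lt_one_of_one_lt_of_neg (by norm_num) (by norm_num)
  have h1r : (0:ℝ) < 1 - r := by linarith
  set Z : ℝ := ∑' n : ℕ, (((n:ℝ) ^ ((3:ℝ)/2))⁻¹) with hZ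
  have hsumm : Summable (fun n : ℕ => (((n:ℝ) ^ ((3:ℝ)/2))⁻¹)) :=
    (Real.summable_nat_rpow_inv).2 (by norm_num)
  have hZ0 : 0 ≤ Z := tsum_nonneg fun n => by positivity
  refine ⟨64 * ((2:ℝ) ^ ((3:ℝ)/2) * (1 - r)⁻¹) * Z, by positivity, fun X => ?_⟩
  set F : ℕ → ℝ := fun q => 64 * (((q:ℝ) ^ (3/4 : ℝ))⁻¹) with hF
  set N := ⌊X⌋₊ with hN
  set T : Finset (ℕ × ℕ) := ((Finset.Icc 2 N) ×ˢ (Finset.Icc 2 N)).filter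
    (fun pk => Nat.Prime pk.1 ∧ 2 ≤ pk.2 ∧ pk.1 ^ pk.2 ≤ N) with hT
  have hsubset : (ppows X).filter (fun q => ¬ q.Prime)
      ⊆ T.image (fun pk => pk.1 ^ pk.2) := by
    intro q hq
    simp only [Finset.mem_filter, ppows, Finset.mem_Icc] at hq
    obtain ⟨⟨⟨h2q, hqN⟩, hpp⟩, hnp⟩ := hq
    obtain ⟨p, k, hp, hk, hpk⟩ := hpp
    have hp' : Nat.Prime p := Nat.prime_iff.mpr hp
    have hp2 : 2 ≤ p := hp'.two_le
    have hk2 : 2 ≤ k := by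
      by_contra h
      have hk1 : k = 1 := by omega
      subst hk1
      rw [pow_one] at hpk
      exact hnp (hpk ▸ hp')
    refine Finset.mem_image.2 ⟨(p, k), ?_, hpk⟩
    simp only [hT, Finset.mem_filter, Finset.mem_product, Finset.mem_Icc]
    refine ⟨⟨⟨hp2, ?_⟩, ?_, ?_⟩, hp', hk2, by omega⟩
    · calc p ≤ p ^ k := Nat.le_self_pow (by omega) p
        _ ≤ N := by omega
    · omega
    · calc k ≤ 2 ^ k := Nat.le_of_lt k.lt_two_pow_self
        _ ≤ p ^ k := Nat.pow_le_pow_left hp2 k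
        _ ≤ N := by omega
  have hinj : ∀ a ∈ T, ∀ b ∈ T, a.1 ^ a.2 = b.1 ^ b.2 → a = b := by
    intro a ha b hb hab
    simp only [hT, Finset.mem_filter] at ha hb
    have hpa := ha.2.1; have hpb := hb.2.1
    have h1 : a.1 = b.1 := by
      have hd : a.1 ∣ b.1 ^ b.2 := hab ▸ dvd_pow_self a.1 (by omega)
      exact (Nat.prime_dvd_prime_iff_eq hpa hpb).1 (hpa.dvd_of_dvd_pow hd)
    have h2 : a.2 = b.2 := by
      apply Nat.pow_right_injective hpa.two_le
      show a.1 ^ a.2 = a.1 ^ b.2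
      rw [hab, h1]
    exact Prod.ext h1 h2
  have himg := Finset.sum_image (f := F) (g := fun pk : ℕ × ℕ => pk.1 ^ pk.2) (s := T) hinj
  have hsum_k : ∑ k ∈ Finset.Icc 2 N, r ^ k ≤ (1-r)⁻¹ := by
    refine le_trans (Summable.sum_le_tsum (Finset.Icc 2 N)
      (fun _ _ => pow_nonneg hr0 _) (summable_geometric_of_lt_one hr0 hr1)) ?_
    rw [tsum_geometric_of_lt_one hr0 hr1]
  have hsum_p : ∑ p ∈ Finset.Icc 2 N, (((p:ℝ)) ^ ((3:ℝ)/2))⁻¹ ≤ Z :=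
    Summable.sum_le_tsum _ (fun _ _ => by positivity) hsumm
  calc ∑ q ∈ (ppows X).filter (fun q => ¬ q.Prime), (Real.log q)^2 / q
      ≤ ∑ q ∈ (ppows X).filter (fun q => ¬ q.Prime), F q := by
        refine Finset.sum_le_sum fun q hq => ?_
        simp only [Finset.mem_filter, ppows, Finset.mem_Icc] at hq
        exact log_sq_div_le q hq.1.1.1
    _ ≤ ∑ q ∈ T.image (fun pk => pk.1 ^ pk.2), F q :=
        Finset.sum_le_sum_of_subset_of_nonneg hsubset (fun q _ _ => by positivity)
    _ = ∑ pk ∈ T, F (pk.1 ^ pk.2) := himg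
    _ ≤ ∑ pk ∈ T, 64 * (((pk.1:ℝ) ^ ((3:ℝ)/2))⁻¹ * ((2:ℝ) ^ ((3:ℝ)/2) * r ^ pk.2)) := by
        refine Finset.sum_le_sum fun pk hpk => ?_
        simp only [hT, Finset.mem_filter] at hpk
        have := pair_bound pk.1 pk.2 hpk.2.1.two_le hpk.2.2.1
        have h64 : (0:ℝ) ≤ 64 := by norm_num
        simpa [hF] using mul_le_mul_of_nonneg_left this h64
    _ ≤ ∑ pk ∈ (Finset.Icc 2 N) ×ˢ (Finset.Icc 2 N),
          64 * (((pk.1:ℝ) ^ ((3:ℝ)/2))⁻¹ * ((2:ℝ) ^ ((3:ℝ)/2) * r ^ pk.2)) := by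
        refine Finset.sum_le_sum_of_subset_of_nonneg (Finset.filter_subset _ _)
          (fun pk _ _ => by positivity)
    _ = ∑ p ∈ Finset.Icc 2 N, ∑ k ∈ Finset.Icc 2 N,
          (64 * (2:ℝ) ^ ((3:ℝ)/2) * ((p:ℝ) ^ ((3:ℝ)/2))⁻¹) * r ^ k := by
        rw [Finset.sum_product]
        exact Finset.sum_congr rfl fun p _ => Finset.sum_congr rfl fun k _ => by ring
    _ = ∑ p ∈ Finset.Icc 2 N,
          (64 * (2:ℝ) ^ ((3:ℝ)/2) * ((p:ℝ) ^ ((3:ℝ)/2))⁻¹) * ∑ k ∈ Finset.Icc 2 N, r ^ k := by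
        exact Finset.sum_congr rfl fun p _ => (Finset.mul_sum _ _ _).symm
    _ ≤ ∑ p ∈ Finset.Icc 2 N,
          (64 * (2:ℝ) ^ ((3:ℝ)/2) * ((p:ℝ) ^ ((3:ℝ)/2))⁻¹) * (1-r)⁻¹ := by
        refine Finset.sum_le_sum fun p _ => ?_
        exact mul_le_mul_of_nonneg_left hsum_k (by positivity)
    _ = (64 * (2:ℝ) ^ ((3:ℝ)/2) * (1-r)⁻¹) * ∑ p ∈ Finset.Icc 2 N, ((p:ℝ) ^ ((3:ℝ)/2))⁻¹ := by
        rw [Finset.mul_sum]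
        exact Finset.sum_congr rfl fun p _ => by ring
    _ ≤ (64 * (2:ℝ) ^ ((3:ℝ)/2) * (1-r)⁻¹) * Z := by
        exact mul_le_mul_of_nonneg_left hsum_p (by positivity)
    _ = 64 * ((2:ℝ) ^ ((3:ℝ)/2) * (1 - r)⁻¹) * Z := by ring


/-- If `|λ₀(X)| ≪ B_g(X)/log X` and `B_{g - λ₀(X) log}(X) = o(B_g(X))`, then
`|λ₀(X)| ≥ (1/2) B_g(X)/log X` for all large `X`. -/
theorem stmt14 (g : ℕ → ℝ) (hg : IsAdditiveR g) (lam0 : ℝ → ℝ)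
    (hbd : ∃ C : ℝ, 0 < C ∧ ∀ X : ℝ, 3 ≤ X → |lam0 X| ≤ C * BgR g X / Real.log X)
    (hsmall : ∀ ε : ℝ, 0 < ε → ∃ X₀ : ℝ, ∀ X : ℝ, X₀ ≤ X →
      BgR (fun n => g n - lam0 X * Real.log n) X ≤ ε * BgR g X) :
    ∃ X₀ : ℝ, ∀ X : ℝ, X₀ ≤ X →
      (1 / 2) * BgR g X / Real.log X ≤ |lam0 X| := by
  obtain ⟨C₀, hC00, hC0⟩ := ppow_part
  obtain ⟨X₁, hX₁⟩ := hsmall (1/8) (by norm_num)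
  set c : ℝ := 2 * Real.log 2 with hc
  have hcpos : 0 < c := by
    have := Real.log_pos (by norm_num : (1:ℝ) < 2)
    positivity
  set M : ℝ := max (8 * c) (Real.sqrt (2 * (2 * c ^ 2 + C₀))) with hM
  have hM0 : 0 < M := lt_of_lt_of_le (by positivity) (le_max_left _ _)
  refine ⟨max X₁ (Real.exp M), fun X hX => ?_⟩
  have hXX₁ : X₁ ≤ X := le_trans (le_max_left _ _) hX
  have hXe : Real.exp M ≤ X := le_trans (le_max_right _ _) hX
  have hX1 : 1 ≤ X := le_trans (by simpa using Real.one_le_exp hM0.le) hXe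
  set L : ℝ := Real.log X with hL
  have hLM : M ≤ L := by
    calc M = Real.log (Real.exp M) := (Real.log_exp M).symm
      _ ≤ L := Real.log_le_log (Real.exp_pos M) hXe
  have hLpos : 0 < L := lt_of_lt_of_le hM0 hLM
  -- bound on BgR log
  have hsplit : ∑ q ∈ ppows X, (Real.log q) ^ 2 / (q:ℝ)
      = (∑ q ∈ (ppows X).filter Nat.Prime, (Real.log q)^2 / q)
        + ∑ q ∈ (ppows X).filter (fun q => ¬ q.Prime), (Real.log q)^2 / q :=
    (Finset.sum_filter_add_sum_filter_not _ _ _).symm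
  have hsum_le : ∑ q ∈ ppows X, (Real.log q) ^ 2 / (q:ℝ) ≤ 3 * L ^ 2 := by
    rw [hsplit]
    have h1 := prime_part X hX1
    have h2 := hC0 X
    have hc1 : 8 * c ≤ L := le_trans (le_max_left _ _) hLM
    have hc2 : 2 * (2 * c ^ 2 + C₀) ≤ L ^ 2 := by
      have := le_trans (le_max_right _ _) hLM
      calc 2 * (2 * c ^ 2 + C₀)
          = Real.sqrt (2 * (2 * c ^ 2 + C₀)) ^ 2 := (Real.sq_sqrt (by positivity)).symm
        _ ≤ L ^ 2 := by
            apply pow_le_pow_left₀ (Real.sqrt_nonneg _) this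
    nlinarith [h1, h2]
  have hBlog : BgR (fun n => Real.log n) X ≤ (7/4) * L := by
    have : BgR (fun n => Real.log n) X ≤ Real.sqrt (3 * L ^ 2) := by
      unfold BgR
      exact Real.sqrt_le_sqrt hsum_le
    refine this.trans ?_
    rw [show (3:ℝ) * L ^ 2 = (Real.sqrt 3 * L)^2 by
      rw [mul_pow, Real.sq_sqrt (by norm_num)]]
    rw [Real.sqrt_sq (by positivity)]
    have h3 : Real.sqrt 3 ≤ 7/4 := by
      rw [show (7:ℝ)/4 = Real.sqrt ((7/4)^2) from (Real.sqrt_sq (by norm_num)).symm]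
      apply Real.sqrt_le_sqrt; norm_num
    exact mul_le_mul_of_nonneg_right h3 hLpos.le
  have htri := lem_triangle g (lam0 X) X
  have hsm := hX₁ X hXX₁
  have habs : 0 ≤ |lam0 X| := abs_nonneg _
  have hkey : BgR g X ≤ |lam0 X| * ((7/4) * L) + (1/8) * BgR g X := by
    refine htri.trans (add_le_add ?_ hsm)
    exact mul_le_mul_of_nonneg_left hBlog habs
  rw [div_le_iff₀ hLpos]
  nlinarith [hkey]
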